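/- Let K be an algebraically closed field of characteristic p > 0, D ⊆ ℕ₀ⁿ, and M ⊆ D such that for every d ∈ D there is a non-negative integer α with p^α · d lying in the subgroup of ℤⁿ generated by M_J := { m ∈ M : supp(m) ⊆ supp(d) }. Then for any v, w ∈ Kⁿ with x^d(v) ≠ x^d(w) for some d ∈ D, there exists m in the submonoid of ℕ₀ⁿ generated by M with x^m(v) ≠ x^m(w). -/

import Mathlib

private lemma pow_p_pow_inj {K : Type*} [Field K] (p : ℕ) [Fact p.Prime] [CharP K p]
    (α : ℕ) {a b : K} (h : a ^ p ^ α = b ^ p ^ α) : a = b := by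
  induction α with
  | zero => simpa using h
  | succ α ih =>
    apply ih
    apply frobenius_inj K p
    simpa [frobenius_def, ← pow_mul, pow_succ] using h

/-- positive characteristic version: if for each `d ∈ D` some
`p^α • d` lies in the subgroup generated by the elements of `M` supported in
`supp(d)`, then monomials with exponents in the monoid generated by `M`
separate any points separated by monomials with exponents in `D`. -/
theorem monomials_separating_of_closure_char_p
    (K : Type*) [Field K] [IsAlgClosed K] (p : ℕ) [hp : Fact p.Prime]
    [hchar : CharP K p] (n : ℕ)
    (D M : Set (Fin n → ℕ)) (hMD : M ⊆ D)
    (ι : (Fin n → ℕ) → (Fin n → ℤ)) (hι : ι = fun m i => (m i : ℤ))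
    (hyp : ∀ d ∈ D, ∃ α : ℕ, ((p : ℤ) ^ α) • ι d ∈
      AddSubgroup.closure (ι '' {m | m ∈ M ∧ {i | m i ≠ 0} ⊆ {i | d i ≠ 0}})) :
    ∀ v w : Fin n → K, (∃ d ∈ D, (∏ i, v i ^ d i) ≠ (∏ i, w i ^ d i)) →
      ∃ m ∈ AddSubmonoid.closure M, (∏ i, v i ^ m i) ≠ (∏ i, w i ^ m i) := by
  subst hι
  intro v w hvw
  by_contra hcon
  push_neg at hcon
  obtain ⟨d, hdD, hd⟩ := hvw
  apply hd
  have hM : ∀ m ∈ M, (∏ i, v i ^ m i) = ∏ i, w i ^ m i :=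
    fun m hm => hcon m (AddSubmonoid.subset_closure hm)
  obtain ⟨α, hα⟩ := hyp d hdD
  by_cases hz : ∀ i, d i ≠ 0 → v i ≠ 0 ∧ w i ≠ 0
  · -- all relevant coordinates are nonzero: work in the units group
    set v' : Fin n → Kˣ := fun i => if h : d i ≠ 0 then Units.mk0 (v i) (hz i h).1 else 1
      with hv'
    set w' : Fin n → Kˣ := fun i => if h : d i ≠ 0 then Units.mk0 (w i) (hz i h).2 else 1
      with hw'
    have key : ∀ (u : Fin n → K) (u' : Fin n → Kˣ),
        (∀ i, d i ≠ 0 → (u' i : K) = u i) →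
        ∀ m : Fin n → ℕ, {i | m i ≠ 0} ⊆ {i | d i ≠ 0} →
        ((∏ i, u' i ^ (m i : ℤ) : Kˣ) : K) = ∏ i, u i ^ m i := by
      intro u u' hu m hm
      push_cast
      refine Finset.prod_congr rfl fun i _ => ?_
      by_cases h0 : m i = 0
      · simp [h0]
      · rw [hu i (hm h0)]
        norm_cast
    have hv'c : ∀ i, d i ≠ 0 → (v' i : K) = v i := by
      intro i h; simp [hv', h]
    have hw'c : ∀ i, d i ≠ 0 → (w' i : K) = w i := by
      intro i h; simp [hw', h]
    have hP : ∀ e ∈ AddSubgroup.closure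
        ((fun m i => (m i : ℤ)) '' {m | m ∈ M ∧ {i | m i ≠ 0} ⊆ {i | d i ≠ 0}}),
        (∏ i, v' i ^ e i) = ∏ i, w' i ^ e i := by
      intro e he
      induction he using AddSubgroup.closure_induction with
      | mem e he =>
        obtain ⟨m, ⟨hmM, hms⟩, rfl⟩ := he
        apply Units.ext
        rw [key v v' hv'c m hms, key w w' hw'c m hms]
        exact hM m hmM
      | zero => simp
      | add a b _ _ ha hb =>
        simp only [Pi.add_apply, zpow_add]
        rw [Finset.prod_mul_distrib, Finset.prod_mul_distrib, ha, hb]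
      | neg a _ ha =>
        simp only [Pi.neg_apply, zpow_neg]
        rw [Finset.prod_inv_distrib, Finset.prod_inv_distrib, ha]
    have hPd := hP _ hα
    simp only [Pi.smul_apply, smul_eq_mul] at hPd
    have hsplit : ∀ u' : Fin n → Kˣ,
        (∏ i, u' i ^ ((p : ℤ) ^ α * (d i : ℤ))) = (∏ i, u' i ^ (d i : ℤ)) ^ (p ^ α : ℕ) := by
      intro u'
      rw [← Finset.prod_pow]
      refine Finset.prod_congr rfl fun i _ => ?_
      rw [mul_comm, zpow_mul]
      norm_cast
    rw [hsplit, hsplit] at hPd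
    have hPd' : ((∏ i, v' i ^ (d i : ℤ) : Kˣ) : K) ^ (p ^ α : ℕ)
        = ((∏ i, w' i ^ (d i : ℤ) : Kˣ) : K) ^ (p ^ α : ℕ) := by
      rw [← Units.val_pow_eq_pow_val, ← Units.val_pow_eq_pow_val, hPd]
    have := pow_p_pow_inj p α hPd'
    rwa [key v v' hv'c d (fun _ h => h), key w w' hw'c d (fun _ h => h)] at this
  · -- some relevant coordinate vanishes
    push_neg at hz
    obtain ⟨i, hdi, h0⟩ := hz
    -- find m ∈ M_J with m i ≠ 0
    have hexm : ∃ m, (m ∈ M ∧ {j | m j ≠ 0} ⊆ {j | d j ≠ 0}) ∧ m i ≠ 0 := by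
      by_contra hno
      push_neg at hno
      have hall : ∀ e ∈ AddSubgroup.closure
          ((fun m j => (m j : ℤ)) '' {m | m ∈ M ∧ {j | m j ≠ 0} ⊆ {j | d j ≠ 0}}),
          e i = 0 := by
        intro e he
        induction he using AddSubgroup.closure_induction with
        | mem e he =>
          obtain ⟨m, hm, rfl⟩ := he
          simp [hno m hm]
        | zero => rfl
        | add a b _ _ ha hb => simp [ha, hb]
        | neg a _ ha => simp [ha]
      have h2 := hall _ hα
      simp only [Pi.smul_apply, smul_eq_mul, mul_eq_zero] at h2
      rcases h2 with h2 | h2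
      · exact pow_ne_zero α (by exact_mod_cast hp.out.ne_zero) h2
      · exact hdi (by exact_mod_cast h2)
    obtain ⟨m, ⟨hmM, hms⟩, hmi⟩ := hexm
    have sym : ∀ a b : Fin n → K,
        ((∏ j, a j ^ m j) = ∏ j, b j ^ m j) → a i = 0 → (∏ j, b j ^ d j) = 0 := by
      intro a b hab ha
      have h1 : (∏ j, a j ^ m j) = 0 :=
        Finset.prod_eq_zero (Finset.mem_univ i) (by simp [ha, zero_pow hmi])
      rw [hab] at h1
      obtain ⟨j, _, hj⟩ := Finset.prod_eq_zero_iff.mp h1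
      have hmj : m j ≠ 0 := by
        intro h; rw [h] at hj; simp at hj
      have hbj : b j = 0 := by
        exact pow_eq_zero_iff hmj |>.mp hj
      exact Finset.prod_eq_zero (Finset.mem_univ j) (by simp [hbj, zero_pow (hms hmj)])
    by_cases hvi : v i = 0
    · rw [sym v w (hM m hmM) hvi,
        Finset.prod_eq_zero (Finset.mem_univ i) (by simp [hvi, zero_pow hdi])]
    · have hwi := h0 hvi
      rw [sym w v (hM m hmM).symm hwi,
        Finset.prod_eq_zero (Finset.mem_univ i) (by simp [hwi, zero_pow hdi])]
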